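/- The splitting of an integrally convex set is integrally convex. In particular, if S ⊆ ℤⁿ is integrally convex, then the elementary splitting T = {(y₀,y₁,y₂,…,y_n) ∈ ℤ^{n+1} : (y₀+y₁, y₂, …, y_n) ∈ S} is integrally convex. -/

import Mathlib

/-- The integral neighborhood `N(x)` of a real vector `x`. -/
def intNbhd {n : ℕ} (x : Fin n → ℝ) : Set (Fin n → ℤ) :=
  {z | ∀ i, |x i - (z i : ℝ)| < 1}

/-- Componentwise coercion `ℤⁿ → ℝⁿ`. -/
def toR {n : ℕ} (z : Fin n → ℤ) : Fin n → ℝ := fun i => (z i : ℝ)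

/-- A nonempty set `S ⊆ ℤⁿ` is integrally convex if every `x ∈ conv(S)` lies in the
convex hull of `S ∩ N(x)`. -/
def IntegrallyConvexSet {n : ℕ} (S : Set (Fin n → ℤ)) : Prop :=
  S.Nonempty ∧ ∀ x : Fin n → ℝ,
    x ∈ convexHull ℝ (toR '' S) → x ∈ convexHull ℝ (toR '' (S ∩ intNbhd x))


noncomputable def muD (x0 x1 : ℝ) : ℝ :=
  if Int.fract x0 < Int.fract (x0 + x1) then (⌊x0⌋ : ℝ)
  else ⌊x0⌋ + (Int.fract x0 - Int.fract (x0 + x1)) / (1 - Int.fract (x0 + x1))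

noncomputable def del (x0 x1 : ℝ) : ℝ :=
  if Int.fract x0 < Int.fract (x0 + x1) then Int.fract x0 / Int.fract (x0 + x1)
  else (1 - Int.fract x0) / (1 - Int.fract (x0 + x1))

lemma muD_add_del (x0 x1 : ℝ) :
    muD x0 x1 + del x0 x1 * (x0 + x1 - (⌊x0 + x1⌋ : ℝ)) = x0 := by
  have hf0 : 0 ≤ Int.fract x0 := Int.fract_nonneg _
  have hg1 : Int.fract (x0 + x1) < 1 := Int.fract_lt_one _
  have hfr : (⌊x0⌋ : ℝ) + Int.fract x0 = x0 := Int.floor_add_fract _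
  have hgr : x0 + x1 - (⌊x0 + x1⌋ : ℝ) = Int.fract (x0 + x1) := by
    rw [Int.self_sub_floor]
  rw [hgr, muD, del]
  split_ifs with h
  · have hg0 : 0 < Int.fract (x0 + x1) := lt_of_le_of_lt hf0 h
    field_simp
    exact hfr
  · have h1g : 0 < 1 - Int.fract (x0 + x1) := by linarith
    field_simp
    ring_nf
    nlinarith [hfr]

lemma key' (x0 x1 : ℝ) (s d p : ℤ) (f g : ℝ)
    (hf0 : 0 ≤ f) (hf1 : f < 1) (hg0 : 0 ≤ g) (hg1 : g < 1)
    (hx0 : x0 = (p : ℝ) + f) (hcg : x0 + x1 = (d : ℝ) + g)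
    (hs : |x0 + x1 - (s : ℝ)| < 1) :
    ∃ (m : ℤ) (r : ℝ), 0 ≤ r ∧ r ≤ 1 ∧
      (m : ℝ) + r = (if f < g then (p : ℝ) else (p : ℝ) + (f - g) / (1 - g)) +
        (if f < g then f / g else (1 - f) / (1 - g)) * ((s : ℝ) - (d : ℝ)) ∧
      |x0 - (m : ℝ)| < 1 ∧ |x1 - ((s : ℝ) - (m : ℝ))| < 1 ∧
      (r ≠ 0 → |x0 - ((m : ℝ) + 1)| < 1 ∧ |x1 - ((s : ℝ) - ((m : ℝ) + 1))| < 1) := by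
  have habs := abs_lt.1 hs
  have hsle : s ≤ d + 1 := by
    have h2 : (s : ℝ) < (d : ℝ) + 2 := by linarith
    have h3 : s < d + 2 := by exact_mod_cast h2
    omega
  have hsge : d ≤ s := by
    have h2 : (d : ℝ) < (s : ℝ) + 1 := by linarith
    have h3 : d < s + 1 := by exact_mod_cast h2
    omega
  have hsd : s = d ∨ (s = d + 1 ∧ 0 < g) := by
    rcases eq_or_lt_of_le hsge with h | h
    · exact Or.inl h.symm
    · have hs1 : s = d + 1 := le_antisymm hsle h
      refine Or.inr ⟨hs1, ?_⟩
      have h2 := habs.1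
      rw [hs1] at h2; push_cast at h2
      linarith
  by_cases hfg : f < g
  · have hgpos : 0 < g := lt_of_le_of_lt hf0 hfg
    rcases hsd with hsd | ⟨hsd, _⟩
    · refine ⟨p, 0, le_refl _, by norm_num, ?_, ?_, ?_, by simp⟩
      · subst hsd; simp [hfg]
      · rw [abs_lt]; constructor <;> nlinarith
      · subst hsd; rw [abs_lt]; constructor <;> nlinarith
    · refine ⟨p, f / g, by positivity, by rw [div_le_one hgpos]; linarith, ?_, ?_, ?_, ?_⟩
      · subst hsd; simp only [if_pos hfg]; push_cast; field_simp; ring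
      · rw [abs_lt]; constructor <;> nlinarith
      · subst hsd; push_cast; rw [abs_lt]; constructor <;> nlinarith
      · intro hr
        have hfpos : 0 < f := by
          rcases eq_or_lt_of_le hf0 with h | h
          · exact absurd (by rw [← h]; simp) hr
          · exact h
        constructor
        · rw [abs_lt]; constructor <;> nlinarith
        · subst hsd; push_cast; rw [abs_lt]; constructor <;> nlinarith
  · have h1g : 0 < 1 - g := by linarith
    rcases hsd with hsd | ⟨hsd, hgpos⟩
    · refine ⟨p, (f - g) / (1 - g), ?_, ?_, ?_, ?_, ?_, ?_⟩
      · apply div_nonneg _ (le_of_lt h1g); linarith [not_lt.1 hfg]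
      · rw [div_le_one h1g]; linarith
      · subst hsd; simp only [if_neg hfg]; push_cast; ring
      · rw [abs_lt]; constructor <;> nlinarith
      · subst hsd; rw [abs_lt]; constructor <;> nlinarith [not_lt.1 hfg]
      · intro hr
        have hflt : g < f := by
          rcases eq_or_lt_of_le (not_lt.1 hfg) with h | h
          · exfalso; apply hr; rw [h]; simp
          · exact h
        constructor
        · rw [abs_lt]; constructor <;> nlinarith
        · subst hsd; push_cast; rw [abs_lt]; constructor <;> nlinarith
    · refine ⟨p + 1, 0, le_refl _, by norm_num, ?_, ?_, ?_, by simp⟩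
      · subst hsd; simp only [if_neg hfg]; push_cast; field_simp; ring
      · have : g ≤ f := not_lt.1 hfg
        push_cast; rw [abs_lt]; constructor <;> nlinarith
      · subst hsd; push_cast; rw [abs_lt]
        have : g ≤ f := not_lt.1 hfg
        constructor <;> nlinarith

lemma key (x0 x1 : ℝ) (s : ℤ) (hs : |x0 + x1 - (s : ℝ)| < 1) :
    ∃ (m : ℤ) (r : ℝ), 0 ≤ r ∧ r ≤ 1 ∧
      (m : ℝ) + r = muD x0 x1 + del x0 x1 * ((s : ℝ) - (⌊x0 + x1⌋ : ℝ)) ∧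
      |x0 - (m : ℝ)| < 1 ∧ |x1 - ((s : ℝ) - (m : ℝ))| < 1 ∧
      (r ≠ 0 → |x0 - ((m : ℝ) + 1)| < 1 ∧ |x1 - ((s : ℝ) - ((m : ℝ) + 1))| < 1) := by
  have h := key' x0 x1 s ⌊x0 + x1⌋ ⌊x0⌋ (Int.fract x0) (Int.fract (x0 + x1))
    (Int.fract_nonneg _) (Int.fract_lt_one _) (Int.fract_nonneg _) (Int.fract_lt_one _)
    (by rw [Int.floor_add_fract]) (by rw [Int.floor_add_fract]) hs
  simpa [muD, del] using h

def projZ {n : ℕ} (y : Fin (n + 1) → ℤ) : Fin n → ℤ :=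
  fun i => if (i : ℕ) = 0 then y 0 + y 1 else y i.succ

lemma segment_mem_convexHull {E : Type*} [AddCommGroup E] [Module ℝ E]
    {A : Set E} {z0 z1 : E} {r : ℝ} (h0 : 0 ≤ r) (h1 : r ≤ 1)
    (hz0 : z0 ∈ A) (hz1 : r ≠ 0 → z1 ∈ A) :
    (1 - r) • z0 + r • z1 ∈ convexHull ℝ A := by
  rcases eq_or_ne r 0 with h | h
  · subst h
    simpa using subset_convexHull ℝ A hz0
  · exact (convex_convexHull ℝ A) (subset_convexHull ℝ A hz0)
      (subset_convexHull ℝ A (hz1 h)) (by linarith) h0 (by ring)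

/-- The elementary splitting
`T = {(y₀,y₁,y₂,…,y_n) : (y₀+y₁, y₂, …, y_n) ∈ S}` of an integrally convex set `S`
is integrally convex. -/
theorem splitting_integrallyConvexSet {n : ℕ} (S : Set (Fin n → ℤ))
    (hS : IntegrallyConvexSet S) :
    IntegrallyConvexSet {y : Fin (n + 1) → ℤ |
      (fun i : Fin n => if (i : ℕ) = 0 then y 0 + y 1 else y i.succ) ∈ S} := by
  obtain ⟨⟨s₀, hs₀⟩, hS2⟩ := hS
  constructor
  · refine ⟨Fin.cons 0 s₀, ?_⟩
    show projZ (Fin.cons 0 s₀) ∈ S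
    have : projZ (Fin.cons 0 s₀) = s₀ := by
      funext i
      have hnpos : 0 < n := i.pos
      by_cases hi : (i : ℕ) = 0
      · have h1 : (1 : Fin (n + 1)) = Fin.succ i := by
          apply Fin.ext
          simp [Fin.val_one', Nat.mod_eq_of_lt (by omega : 1 < n + 1), hi]
        simp [projZ, hi, h1]
      · simp [projZ, hi]
    rw [this]; exact hs₀
  · intro x hx
    rcases Nat.eq_zero_or_pos n with hn | hn
    · -- n = 0 case
      subst hn
      have hone : ∀ j : Fin 1, j = 0 := fun j => Fin.ext (by omega)
      have h1 := Int.fract_nonneg (x 0)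
      have h2 := Int.fract_lt_one (x 0)
      have h3 := Int.floor_add_fract (x 0)
      have hxeq : x = (1 - Int.fract (x 0)) • toR (fun _ : Fin 1 => ⌊x 0⌋) +
          Int.fract (x 0) • toR (fun _ : Fin 1 => ⌊x 0⌋ + 1) := by
        funext j
        rw [hone j]
        simp only [Pi.add_apply, Pi.smul_apply, toR, smul_eq_mul]
        push_cast
        nlinarith
      have hmem : (1 - Int.fract (x 0)) • toR (fun _ : Fin 1 => ⌊x 0⌋) +
          Int.fract (x 0) • toR (fun _ : Fin 1 => ⌊x 0⌋ + 1) ∈ convexHull ℝ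
          (toR '' ({y : Fin (0 + 1) → ℤ |
            (fun i : Fin 0 => if (i : ℕ) = 0 then y 0 + y 1 else y i.succ) ∈ S} ∩ intNbhd x)) := by
        apply segment_mem_convexHull (Int.fract_nonneg _) (le_of_lt (Int.fract_lt_one _))
        · refine ⟨fun _ => ⌊x 0⌋, ⟨?_, ?_⟩, rfl⟩
          · show projZ (fun _ : Fin 1 => ⌊x 0⌋) ∈ S
            have he : projZ (fun _ : Fin 1 => ⌊x 0⌋) = s₀ := funext fun i => i.elim0
            rw [he]; exact hs₀
          · intro j
            rw [hone j, abs_lt]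
            constructor <;> nlinarith
        · intro hr
          refine ⟨fun _ => ⌊x 0⌋ + 1, ⟨?_, ?_⟩, rfl⟩
          · show projZ (fun _ : Fin 1 => ⌊x 0⌋ + 1) ∈ S
            have he : projZ (fun _ : Fin 1 => ⌊x 0⌋ + 1) = s₀ := funext fun i => i.elim0
            rw [he]; exact hs₀
          · intro j
            have h4 : 0 < Int.fract (x 0) := lt_of_le_of_ne h1 (Ne.symm hr)
            rw [hone j, abs_lt]
            push_cast
            constructor <;> nlinarith
      nth_rewrite 2 [hxeq]
      exact hmem
    · -- n ≥ 1
      set i₀ : Fin n := ⟨0, hn⟩ with hi₀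
      have hsucc1 : (i₀ : Fin n).succ = (1 : Fin (n + 1)) := by
        apply Fin.ext
        simp [hi₀, Fin.val_one', Nat.mod_eq_of_lt (by omega : 1 < n + 1)]
      set px : Fin n → ℝ := fun i => if (i : ℕ) = 0 then x 0 + x 1 else x i.succ with hpx
      have hpxi₀ : px i₀ = x 0 + x 1 := by simp [hpx, hi₀]
      -- extract a convex combination for x
      rw [convexHull_eq] at hx
      simp only [Set.mem_setOf_eq] at hx
      obtain ⟨ι, t, w, z, hw0, hw1, hzT, hxc⟩ := hx
      rw [Finset.centerMass_eq_of_sum_1 _ _ hw1] at hxc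
      have hY : ∀ j : ι, ∃ y : Fin (n + 1) → ℤ, j ∈ t → (projZ y ∈ S ∧ toR y = z j) := by
        intro j
        by_cases hj : j ∈ t
        · obtain ⟨y, hy1, hy2⟩ := hzT j hj
          exact ⟨y, fun _ => ⟨hy1, hy2⟩⟩
        · exact ⟨fun _ => 0, fun h => absurd h hj⟩
      choose Y hY using hY
      have hxcoord : ∀ j' : Fin (n + 1), ∑ j ∈ t, w j * ((Y j j' : ℤ) : ℝ) = x j' := by
        intro j'
        have h := congrFun hxc j'
        simp only [Finset.sum_apply, Pi.smul_apply, smul_eq_mul] at h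
        rw [← h]
        refine Finset.sum_congr rfl fun j hj => ?_
        rw [← (hY j hj).2]
        rfl
      -- px lies in the hull of S
      have hpxS : px ∈ convexHull ℝ (toR '' S) := by
        have hpxeq : px = ∑ j ∈ t, w j • toR (projZ (Y j)) := by
          funext i
          rw [Finset.sum_apply]
          simp only [Pi.smul_apply, smul_eq_mul]
          by_cases hi : (i : ℕ) = 0
          · simp only [hpx, if_pos hi]
            rw [← hxcoord 0, ← hxcoord 1, ← Finset.sum_add_distrib]
            refine Finset.sum_congr rfl fun j hj => ?_
            simp only [toR, projZ, if_pos hi]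
            push_cast
            ring
          · simp only [hpx, if_neg hi]
            rw [← hxcoord i.succ]
            refine Finset.sum_congr rfl fun j hj => ?_
            simp only [toR, projZ, if_neg hi]
        rw [hpxeq]
        exact Convex.sum_mem (convex_convexHull ℝ _) hw0 hw1
          (fun j hj => subset_convexHull ℝ _ ⟨projZ (Y j), (hY j hj).1, rfl⟩)
      have hmem := hS2 px hpxS
      rw [convexHull_eq] at hmem
      simp only [Set.mem_setOf_eq] at hmem
      obtain ⟨κ, u, v, zz, hv0, hv1, hzzS, hmc⟩ := hmem
      rw [Finset.centerMass_eq_of_sum_1 _ _ hv1] at hmc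
      have hσ : ∀ k : κ, ∃ sf : Fin n → ℤ, k ∈ u →
          (sf ∈ S ∧ sf ∈ intNbhd px ∧ toR sf = zz k) := by
        intro k
        by_cases hk : k ∈ u
        · obtain ⟨sf, ⟨hsf1, hsf2⟩, hsf3⟩ := hzzS k hk
          exact ⟨sf, fun _ => ⟨hsf1, hsf2, hsf3⟩⟩
        · exact ⟨fun _ => 0, fun h => absurd h hk⟩
      choose σ hσ using hσ
      have hscoord : ∀ i : Fin n, ∑ k ∈ u, v k * ((σ k i : ℤ) : ℝ) = px i := by
        intro i
        have h := congrFun hmc i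
        simp only [Finset.sum_apply, Pi.smul_apply, smul_eq_mul] at h
        rw [← h]
        refine Finset.sum_congr rfl fun k hk => ?_
        rw [← (hσ k hk).2.2]
        rfl
      have hc0 : ∑ k ∈ u, v k * ((σ k i₀ : ℤ) : ℝ) = x 0 + x 1 := by
        rw [hscoord i₀, hpxi₀]
      -- apply the key lemma to each index
      have hkey : ∀ k : κ, ∃ (m : ℤ) (r : ℝ), k ∈ u → (0 ≤ r ∧ r ≤ 1 ∧
          (m : ℝ) + r = muD (x 0) (x 1) +
            del (x 0) (x 1) * (((σ k i₀ : ℤ) : ℝ) - (⌊x 0 + x 1⌋ : ℝ)) ∧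
          |x 0 - (m : ℝ)| < 1 ∧ |x 1 - (((σ k i₀ : ℤ) : ℝ) - (m : ℝ))| < 1 ∧
          (r ≠ 0 → |x 0 - ((m : ℝ) + 1)| < 1 ∧
            |x 1 - (((σ k i₀ : ℤ) : ℝ) - ((m : ℝ) + 1))| < 1)) := by
        intro k
        by_cases hk : k ∈ u
        · have hs : |x 0 + x 1 - ((σ k i₀ : ℤ) : ℝ)| < 1 := by
            have h := (hσ k hk).2.1 i₀
            rw [hpxi₀] at h
            exact h
          obtain ⟨m, r, h1, h2, h3, h4, h5, h6⟩ := key (x 0) (x 1) (σ k i₀) hs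
          exact ⟨m, r, fun _ => ⟨h1, h2, h3, h4, h5, h6⟩⟩
        · exact ⟨0, 0, fun h => absurd h hk⟩
      choose M R hMR using hkey
      -- lattice lifting
      set Z : κ → ℤ → (Fin (n + 1) → ℤ) := fun k a =>
        Fin.cons a (fun i : Fin n => if (i : ℕ) = 0 then σ k i₀ - a else σ k i) with hZdef
      have hZ0 : ∀ k a, Z k a 0 = a := fun k a => rfl
      have hZsucc : ∀ k a (i : Fin n),
          Z k a i.succ = if (i : ℕ) = 0 then σ k i₀ - a else σ k i := fun k a i => rfl
      have hZ1 : ∀ k a, Z k a 1 = σ k i₀ - a := by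
        intro k a
        rw [← hsucc1, hZsucc]
        simp [hi₀]
      -- Z k a is in T
      have hZT : ∀ k, k ∈ u → ∀ a, projZ (Z k a) = σ k := by
        intro k hk a
        funext i
        by_cases hi : (i : ℕ) = 0
        · have hii : i = i₀ := Fin.ext (by simp [hi, hi₀])
          simp only [projZ, if_pos hi, hZ0, hZ1]
          rw [hii]
          ring
        · simp only [projZ, if_neg hi, hZsucc, if_neg hi]
      -- generic affine summation helper
      have hsum_aff : ∀ (F G : κ → ℝ) (A B C : ℝ), (∀ k ∈ u, F k = A + B * G k) →
          (∑ k ∈ u, v k * G k = C) → ∑ k ∈ u, v k * F k = A + B * C := by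
        intro F G A B C hF hG
        calc ∑ k ∈ u, v k * F k = ∑ k ∈ u, (v k * A + B * (v k * G k)) :=
              Finset.sum_congr rfl (fun k hk => by rw [hF k hk]; ring)
          _ = (∑ k ∈ u, v k) * A + B * (∑ k ∈ u, v k * G k) := by
              rw [Finset.sum_add_distrib, ← Finset.sum_mul, ← Finset.mul_sum]
          _ = A + B * C := by rw [hv1, hG]; ring
      -- the final convex combination
      have hfin : x = ∑ k ∈ u, v k •
          ((1 - R k) • toR (Z k (M k)) + R k • toR (Z k (M k + 1))) := by
        funext j'
        rw [Finset.sum_apply]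
        simp only [Pi.smul_apply, Pi.add_apply, smul_eq_mul, toR]
        refine Fin.cases ?_ ?_ j'
        · -- coordinate 0
          rw [hsum_aff _ (fun k => ((σ k i₀ : ℤ) : ℝ))
            (muD (x 0) (x 1) - del (x 0) (x 1) * (⌊x 0 + x 1⌋ : ℝ)) (del (x 0) (x 1))
            (x 0 + x 1) ?_ hc0]
          · have h := muD_add_del (x 0) (x 1)
            ring_nf
            ring_nf at h
            linarith
          · intro k hk
            have h3 := (hMR k hk).2.2.1
            simp only [hZ0]
            push_cast
            linarith [h3]
        · intro i
          by_cases hi : (i : ℕ) = 0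
          · -- coordinate 1
            have hii : i = i₀ := Fin.ext (by simp [hi, hi₀])
            rw [hsum_aff _ (fun k => ((σ k i₀ : ℤ) : ℝ))
              (-(muD (x 0) (x 1)) + del (x 0) (x 1) * (⌊x 0 + x 1⌋ : ℝ))
              (1 - del (x 0) (x 1)) (x 0 + x 1) ?_ hc0]
            · have h := muD_add_del (x 0) (x 1)
              have hxi : x i.succ = x 1 := by rw [hii, hsucc1]
              rw [hxi]
              ring_nf
              ring_nf at h
              linarith
            · intro k hk
              have h3 := (hMR k hk).2.2.1
              simp only [hZsucc, if_pos hi]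
              push_cast
              linarith [h3]
          · -- higher coordinates
            have hCi : ∑ k ∈ u, v k * ((σ k i : ℤ) : ℝ) = x i.succ := by
              rw [hscoord i, hpx]
              simp [if_neg hi]
            rw [hsum_aff _ (fun k => ((σ k i : ℤ) : ℝ)) 0 1 (x i.succ) ?_ hCi]
            · ring
            · intro k hk
              simp only [hZsucc, if_neg hi]
              ring
      nth_rewrite 2 [hfin]
      refine Convex.sum_mem (convex_convexHull ℝ _) hv0 hv1 fun k hk => ?_
      obtain ⟨hr0, hr1, hreq, hb1, hb2, hb3⟩ := hMR k hk
      apply segment_mem_convexHull hr0 hr1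
      · refine ⟨Z k (M k), ⟨?_, ?_⟩, rfl⟩
        · show projZ (Z k (M k)) ∈ S
          rw [hZT k hk]
          exact (hσ k hk).1
        · intro j'
          refine Fin.cases ?_ ?_ j'
          · rw [hZ0]
            exact hb1
          · intro i
            rw [hZsucc]
            by_cases hi : (i : ℕ) = 0
            · have hii : i = i₀ := Fin.ext (by simp [hi, hi₀])
              rw [if_pos hi, hii, hsucc1]
              push_cast
              exact hb2
            · rw [if_neg hi]
              have h := (hσ k hk).2.1 i
              rw [hpx] at h
              simpa [if_neg hi] using h
      · intro hrne
        refine ⟨Z k (M k + 1), ⟨?_, ?_⟩, rfl⟩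
        · show projZ (Z k (M k + 1)) ∈ S
          rw [hZT k hk]
          exact (hσ k hk).1
        · intro j'
          refine Fin.cases ?_ ?_ j'
          · rw [hZ0]
            push_cast
            exact (hb3 hrne).1
          · intro i
            rw [hZsucc]
            by_cases hi : (i : ℕ) = 0
            · have hii : i = i₀ := Fin.ext (by simp [hi, hi₀])
              rw [if_pos hi, hii, hsucc1]
              push_cast
              exact (hb3 hrne).2
            · rw [if_neg hi]
              have h := (hσ k hk).2.1 i
              rw [hpx] at h
              simpa [if_neg hi] using h
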